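/- Let k be a field, n ≥ 1, and let Δ, Δ' ∈ Mat_n(k) be matrices of the same rank. Then there exists a k-linear bijection ψ : Mat_n(k) → Mat_n(k) with ψ(XΔY) = ψ(X)Δ'ψ(Y) for all X, Y ∈ Mat_n(k); that is, the Δ-homotope of the matrix algebra Mat_n(k) is determined up to isomorphism by the rank of Δ. -/

import Mathlib

open LinearMap Submodule

/-- Two endomorphisms of a finite-dimensional space with equal rank differ by
automorphisms: `g = u ∘ f ∘ v`. -/
theorem exists_equiv_comp_eq {k V : Type*} [Field k] [AddCommGroup V] [Module k V]
    [FiniteDimensional k V] (f g : V →ₗ[k] V)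
    (h : Module.finrank k (LinearMap.range f) = Module.finrank k (LinearMap.range g)) :
    ∃ u v : V ≃ₗ[k] V, ∀ x, u (f (v x)) = g x := by
  obtain ⟨Cf, hCf⟩ := Submodule.exists_isCompl (LinearMap.ker f)
  obtain ⟨Cg, hCg⟩ := Submodule.exists_isCompl (LinearMap.ker g)
  obtain ⟨Df, hDf⟩ := Submodule.exists_isCompl (LinearMap.range f)
  obtain ⟨Dg, hDg⟩ := Submodule.exists_isCompl (LinearMap.range g)
  have hker : Module.finrank k (LinearMap.ker g) = Module.finrank k (LinearMap.ker f) := by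
    have h1 := LinearMap.finrank_range_add_finrank_ker f
    have h2 := LinearMap.finrank_range_add_finrank_ker g
    omega
  have hD : Module.finrank k Df = Module.finrank k Dg := by
    have h1 := Submodule.finrank_add_eq_of_isCompl hDf
    have h2 := Submodule.finrank_add_eq_of_isCompl hDg
    omega
  -- iso from complement of ker to range
  let ρf : Cf ≃ₗ[k] LinearMap.range f :=
    (Submodule.quotientEquivOfIsCompl _ _ hCf).symm.trans f.quotKerEquivRange
  let ρg : Cg ≃ₗ[k] LinearMap.range g :=
    (Submodule.quotientEquivOfIsCompl _ _ hCg).symm.trans g.quotKerEquivRange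
  have hρf : ∀ c : Cf, (ρf c : V) = f c := fun c => by
    simp [ρf, Submodule.quotientEquivOfIsCompl_symm_apply,
      LinearMap.quotKerEquivRange_apply_mk]
  have hρg : ∀ c : Cg, (ρg c : V) = g c := fun c => by
    simp [ρg, Submodule.quotientEquivOfIsCompl_symm_apply,
      LinearMap.quotKerEquivRange_apply_mk]
  let φ : LinearMap.range g ≃ₗ[k] LinearMap.range f := LinearEquiv.ofFinrankEq _ _ h.symm
  let κ : LinearMap.ker g ≃ₗ[k] LinearMap.ker f := LinearEquiv.ofFinrankEq _ _ hker
  let δ : Df ≃ₗ[k] Dg := LinearEquiv.ofFinrankEq _ _ hD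
  let θ : Cg ≃ₗ[k] Cf := ρg.trans (φ.trans ρf.symm)
  let v : V ≃ₗ[k] V := (Submodule.prodEquivOfIsCompl _ _ hCg).symm.trans
    ((κ.prodCongr θ).trans (Submodule.prodEquivOfIsCompl _ _ hCf))
  let u : V ≃ₗ[k] V := (Submodule.prodEquivOfIsCompl _ _ hDf).symm.trans
    ((φ.symm.prodCongr δ).trans (Submodule.prodEquivOfIsCompl _ _ hDg))
  have hu : ∀ y : LinearMap.range f, u (y : V) = (φ.symm y : V) := fun y => by
    simp [u, Submodule.prodEquivOfIsCompl_symm_apply_left,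
      Submodule.coe_prodEquivOfIsCompl']
  refine ⟨u, v, fun x => ?_⟩
  obtain ⟨p, rfl⟩ : ∃ p : LinearMap.ker g × Cg,
      Submodule.prodEquivOfIsCompl _ _ hCg p = x :=
    ⟨_, (Submodule.prodEquivOfIsCompl _ _ hCg).apply_symm_apply x⟩
  have hvx : v (Submodule.prodEquivOfIsCompl _ _ hCg p) = (κ p.1 : V) + (θ p.2 : V) := by
    simp [v, Submodule.coe_prodEquivOfIsCompl']
  have hfv : f (v (Submodule.prodEquivOfIsCompl _ _ hCg p)) = ((φ (ρg p.2)) : V) := by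
    rw [hvx, map_add]
    have : f (κ p.1 : V) = 0 := (κ p.1).2
    rw [this, zero_add, ← hρf (θ p.2)]
    simp [θ]
  have hgx : g (Submodule.prodEquivOfIsCompl _ _ hCg p) = ((ρg p.2) : V) := by
    rw [Submodule.coe_prodEquivOfIsCompl', map_add]
    have : g (p.1 : V) = 0 := p.1.2
    rw [this, zero_add, hρg]
  rw [hfv, hgx, hu]
  simp

/-- The Δ-homotope of the matrix algebra `Mat_n(k)` is determined up to
isomorphism by the rank of `Δ`: if `Δ, Δ'` have the same rank, then there is a
k-linear bijection `ψ` with `ψ(XΔY) = ψ(X) Δ' ψ(Y)`. -/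
theorem matrix_homotope_iso_of_rank_eq
    {k : Type*} [Field k] {n : ℕ} (hn : 1 ≤ n)
    (Δ Δ' : Matrix (Fin n) (Fin n) k) (hrank : Δ.rank = Δ'.rank) :
    ∃ ψ : Matrix (Fin n) (Fin n) k ≃ₗ[k] Matrix (Fin n) (Fin n) k,
      ∀ X Y : Matrix (Fin n) (Fin n) k,
        ψ (X * Δ * Y) = ψ X * Δ' * ψ Y := by
  obtain ⟨u, v, huv⟩ := exists_equiv_comp_eq Δ.mulVecLin Δ'.mulVecLin hrank
  set U : Matrix (Fin n) (Fin n) k := LinearMap.toMatrix' (u : (Fin n → k) →ₗ[k] Fin n → k)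
  set Vm : Matrix (Fin n) (Fin n) k := LinearMap.toMatrix' (v : (Fin n → k) →ₗ[k] Fin n → k)
  set U' : Matrix (Fin n) (Fin n) k := LinearMap.toMatrix' (u.symm : (Fin n → k) →ₗ[k] Fin n → k)
  set V' : Matrix (Fin n) (Fin n) k := LinearMap.toMatrix' (v.symm : (Fin n → k) →ₗ[k] Fin n → k)
  have hUU' : U * U' = 1 := by
    rw [← LinearMap.toMatrix'_comp]
    simp [LinearEquiv.comp_coe]
  have hU'U : U' * U = 1 := by
    rw [← LinearMap.toMatrix'_comp]
    simp [LinearEquiv.comp_coe]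
  have hVV' : Vm * V' = 1 := by
    rw [← LinearMap.toMatrix'_comp]
    simp [LinearEquiv.comp_coe]
  have hV'V : V' * Vm = 1 := by
    rw [← LinearMap.toMatrix'_comp]
    simp [LinearEquiv.comp_coe]
  have hU : U.mulVecLin = (u : (Fin n → k) →ₗ[k] Fin n → k) := Matrix.toLin'_toMatrix' _
  have hV : Vm.mulVecLin = (v : (Fin n → k) →ₗ[k] Fin n → k) := Matrix.toLin'_toMatrix' _
  have hΔ' : U * Δ * Vm = Δ' := by
    have hml : (U * Δ * Vm).mulVecLin = Δ'.mulVecLin := by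
      rw [Matrix.mulVecLin_mul, Matrix.mulVecLin_mul, hU, hV]
      exact LinearMap.ext fun x => huv x
    have := congrArg (⇑(LinearMap.toMatrix' :
      ((Fin n → k) →ₗ[k] Fin n → k) ≃ₗ[k] Matrix (Fin n) (Fin n) k)) hml
    rwa [show ∀ A : Matrix (Fin n) (Fin n) k,
        LinearMap.toMatrix' A.mulVecLin = A from fun A => LinearMap.toMatrix'_toLin' A,
      show ∀ A : Matrix (Fin n) (Fin n) k,
        LinearMap.toMatrix' A.mulVecLin = A from fun A => LinearMap.toMatrix'_toLin' A] at this
  refine ⟨LinearEquiv.ofLinear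
    ((LinearMap.mulLeft k V').comp (LinearMap.mulRight k U'))
    ((LinearMap.mulLeft k Vm).comp (LinearMap.mulRight k U)) ?_ ?_, fun X Y => ?_⟩
  · apply LinearMap.ext; intro X
    simp only [LinearMap.comp_apply, LinearMap.mulLeft_apply, LinearMap.mulRight_apply,
      LinearMap.id_apply]
    trans (V' * Vm) * X * (U * U')
    · noncomm_ring
    · rw [hV'V, hUU']; noncomm_ring
  · apply LinearMap.ext; intro X
    simp only [LinearMap.comp_apply, LinearMap.mulLeft_apply, LinearMap.mulRight_apply,
      LinearMap.id_apply]
    trans (Vm * V') * X * (U' * U)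
    · noncomm_ring
    · rw [hVV', hU'U]; noncomm_ring
  · simp only [LinearEquiv.ofLinear_apply, LinearMap.comp_apply, LinearMap.mulLeft_apply,
      LinearMap.mulRight_apply]
    rw [← hΔ']
    trans (V' * X) * ((U' * U) * Δ * (Vm * V')) * (Y * U')
    · rw [hU'U, hVV']; noncomm_ring
    · noncomm_ring
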